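/- Let 0 < Λ < 1. For every θ ∈ (0, π − arcsin Λ), the function κ_Λ is differentiable at θ with (d/dθ) κ_Λ(θ) = −Λ cos(η_Λ(θ)). -/

import Mathlib

open Real Set

noncomputable section

/-- `f_{θ,Λ}(η) = cos(θ + 2η) + 2Λ sin η`. -/
def fFun (θ Λ η : ℝ) : ℝ := Real.cos (θ + 2 * η) + 2 * Λ * Real.sin η

/-- `κ_Λ(θ) = inf_{η ∈ [0,(π−θ)/2]} f_{θ,Λ}(η)`. -/
def kappaFun (Λ θ : ℝ) : ℝ := sInf (fFun θ Λ '' Set.Icc 0 ((Real.pi - θ) / 2))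

end

/-! ### Auxiliary lemmas -/

lemma trig_id12 (A e d Λ : ℝ) (heq : Λ * Real.cos e = Real.sin A) :
    Real.cos (A + (d + d + (d + d))) + 2 * Λ * Real.sin (e + (d + d))
      - (Real.cos A + 2 * Λ * Real.sin e)
    = 4 * Real.sin d ^ 2
        * (-Real.cos A - Λ * Real.sin e - Real.cos (A + (d + d))) := by
  simp only [Real.cos_add, Real.sin_add]
  rw [← heq]
  linear_combination (-3 * Real.cos A * Real.sin d ^ 2
      - 4 * Λ * Real.cos e * Real.cos d * Real.sin d
      + Real.cos A * Real.cos d ^ 2 + Real.cos A + 2 * Λ * Real.sin e)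
    * Real.sin_sq_add_cos_sq d

/-- The critical point is a global minimum of `f_{θ,Λ}` on `[0, (π-θ)/2]`. -/
lemma fmin12 (Λ θ η u : ℝ) (hΛ0 : 0 ≤ Λ) (hΛ1 : Λ ≤ 1) (hθ0 : 0 ≤ θ)
    (hη0 : 0 ≤ η) (hηh : η ≤ Real.pi / 2)
    (hA1 : Real.pi / 2 ≤ θ + 2 * η) (hA2 : θ + 2 * η ≤ Real.pi)
    (heq : Λ * Real.cos η = Real.sin (θ + 2 * η))
    (hu0 : 0 ≤ u) (hu1 : θ + 2 * u ≤ Real.pi) :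
    fFun θ Λ η ≤ fFun θ Λ u := by
  have hsη : 0 ≤ Real.sin η := Real.sin_nonneg_of_nonneg_of_le_pi hη0 (by linarith [Real.pi_pos])
  have hcη : 0 ≤ Real.cos η := Real.cos_nonneg_of_mem_Icc ⟨by linarith [Real.pi_pos], hηh⟩
  have hc : Real.cos (θ + 2 * η) ≤ 0 :=
    Real.cos_nonpos_of_pi_div_two_le_of_le hA1 (by linarith [Real.pi_pos])
  have hpy := Real.sin_sq_add_cos_sq (θ + 2 * η)
  have hpe := Real.sin_sq_add_cos_sq η
  have hc2 : Real.cos (θ + 2 * η) ^ 2 = 1 - (Λ * Real.cos η) ^ 2 := by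
    linear_combination hpy + (Λ * Real.cos η + Real.sin (θ + 2 * η)) * heq
  have hcΛ : Real.cos (θ + 2 * η) + Λ * Real.sin η ≤ 0 := by
    nlinarith [hc2, hpe, hc, mul_nonneg hΛ0 hsη, hΛ1,
      sq_nonneg (Λ * Real.sin η + Real.cos (θ + 2 * η)),
      mul_nonneg (mul_nonneg hΛ0 hΛ0) (sq_nonneg (Real.cos η))]
  have hψπ : θ + u + η ≤ Real.pi := by
    rcases le_total u η with h | h <;> linarith
  have hmono : Real.cos (θ + u + η) ≤ Real.cos (θ + η) :=
    Real.cos_le_cos_of_nonneg_of_le_pi (by linarith) hψπ (by linarith)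
  have hexp : Real.cos (θ + η) = Real.cos (θ + 2 * η) * Real.cos η
      + Λ * Real.cos η * Real.sin η := by
    rw [show θ + η = (θ + 2 * η) - η by ring, Real.cos_sub, heq]
  have hH : 0 ≤ -Real.cos (θ + 2 * η) - Λ * Real.sin η - Real.cos (θ + u + η) := by
    have h1 : (0:ℝ) ≤ 1 + Real.cos η := by linarith [Real.neg_one_le_cos η]
    nlinarith [mul_nonneg h1 (by linarith : (0:ℝ) ≤ -(Real.cos (θ + 2*η) + Λ * Real.sin η))]
  have hid := trig_id12 (θ + 2 * η) η ((u - η) / 2) Λ heq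
  rw [show θ + 2*η + ((u-η)/2 + (u-η)/2 + ((u-η)/2 + (u-η)/2)) = θ + 2*u by ring,
      show η + ((u-η)/2 + (u-η)/2) = u by ring,
      show θ + 2*η + ((u-η)/2 + (u-η)/2) = θ + u + η by ring] at hid
  have := mul_nonneg (mul_nonneg (by norm_num : (0:ℝ) ≤ 4) (sq_nonneg (Real.sin ((u-η)/2)))) hH
  simp only [fFun]
  nlinarith [this, hid]

noncomputable section

/-- `T(x) = π - 2x - arcsin (Λ cos x)`, the inverse parametrization of the critical point. -/
def Tf12 (Λ x : ℝ) : ℝ := Real.pi - 2 * x - Real.arcsin (Λ * Real.cos x)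

end

lemma Tf12_hasDeriv (Λ : ℝ) (hΛ0 : 0 < Λ) (hΛ1 : Λ < 1) (x : ℝ) :
    HasDerivAt (Tf12 Λ)
      (-2 - 1 / Real.sqrt (1 - (Λ * Real.cos x) ^ 2) * (Λ * -Real.sin x)) x := by
  have hb : |Λ * Real.cos x| < 1 := by
    rw [abs_mul]
    calc |Λ| * |Real.cos x| ≤ |Λ| * 1 := by
          exact mul_le_mul_of_nonneg_left (Real.abs_cos_le_one x) (abs_nonneg _)
      _ < 1 := by rw [mul_one, abs_of_pos hΛ0]; exact hΛ1
  have h1 : HasDerivAt (fun y => Λ * Real.cos y) (Λ * -Real.sin x) x :=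
    (Real.hasDerivAt_cos x).const_mul Λ
  have h2 : HasDerivAt Real.arcsin (1 / Real.sqrt (1 - (Λ * Real.cos x) ^ 2))
      (Λ * Real.cos x) :=
    Real.hasDerivAt_arcsin (by intro h; rw [h] at hb; norm_num at hb)
      (by intro h; rw [h] at hb; norm_num at hb)
  have h3 := h2.comp x h1
  have h4 : HasDerivAt (fun y => Real.pi - 2 * y) (-2) x := by
    simpa using (hasDerivAt_const x Real.pi).fun_sub ((hasDerivAt_id x).const_mul 2)
  exact h4.fun_sub h3

lemma Tf12_deriv_neg (Λ : ℝ) (hΛ0 : 0 < Λ) (hΛ1 : Λ < 1) (x : ℝ) :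
    -2 - 1 / Real.sqrt (1 - (Λ * Real.cos x) ^ 2) * (Λ * -Real.sin x) < 0 := by
  have hpy := Real.sin_sq_add_cos_sq x
  have hq : 0 < 1 - (Λ * Real.cos x) ^ 2 := by
    nlinarith [Real.cos_sq_le_one x, sq_nonneg Λ, mul_pos hΛ0 hΛ0]
  have hsq : 0 < Real.sqrt (1 - (Λ * Real.cos x) ^ 2) := Real.sqrt_pos.mpr hq
  have hle : Λ * Real.sin x ≤ Real.sqrt (1 - (Λ * Real.cos x) ^ 2) := by
    rcases le_total (Λ * Real.sin x) 0 with h | h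
    · linarith
    · calc Λ * Real.sin x = Real.sqrt ((Λ * Real.sin x) ^ 2) := (Real.sqrt_sq h).symm
        _ ≤ Real.sqrt (1 - (Λ * Real.cos x) ^ 2) := by
            apply Real.sqrt_le_sqrt
            nlinarith [hpy, sq_nonneg Λ]
  have : 1 / Real.sqrt (1 - (Λ * Real.cos x) ^ 2) * (Λ * Real.sin x) ≤ 1 := by
    rw [div_mul_eq_mul_div, one_mul, div_le_one hsq]; exact hle
  nlinarith

lemma Tf12_anti (Λ : ℝ) (hΛ0 : 0 < Λ) (hΛ1 : Λ < 1) : StrictAnti (Tf12 Λ) := by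
  apply strictAnti_of_deriv_neg
  intro x
  rw [(Tf12_hasDeriv Λ hΛ0 hΛ1 x).deriv]
  exact Tf12_deriv_neg Λ hΛ0 hΛ1 x

lemma Tf12_cont (Λ : ℝ) : Continuous (Tf12 Λ) := by
  unfold Tf12
  exact (continuous_const.sub (continuous_const.mul continuous_id)).sub
    (Real.continuous_arcsin.comp (continuous_const.mul Real.continuous_cos))

lemma Tf12_surj (Λ : ℝ) : Function.Surjective (Tf12 Λ) := by
  intro y
  have h1 : Tf12 Λ ((3 * Real.pi / 2 - y) / 2) ≤ y := by
    unfold Tf12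
    have := Real.neg_pi_div_two_le_arcsin (Λ * Real.cos ((3 * Real.pi / 2 - y) / 2))
    linarith
  have h2 : y ≤ Tf12 Λ ((Real.pi / 2 - y) / 2) := by
    unfold Tf12
    have := Real.arcsin_le_pi_div_two (Λ * Real.cos ((Real.pi / 2 - y) / 2))
    linarith
  have hab : (Real.pi / 2 - y) / 2 ≤ (3 * Real.pi / 2 - y) / 2 := by
    linarith [Real.pi_pos]
  have := intermediate_value_Icc' hab ((Tf12_cont Λ).continuousOn)
  obtain ⟨x, _, hx⟩ := this ⟨h1, h2⟩
  exact ⟨x, hx⟩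

theorem stmt12 (Λ θ η : ℝ) (hΛ0 : 0 < Λ) (hΛ1 : Λ < 1)
    (hθ0 : 0 < θ) (hθ : θ < Real.pi - Real.arcsin Λ)
    (hη : η ∈ Set.Icc (max 0 (Real.pi / 2 - θ)) ((Real.pi - θ) / 2))
    (heq : Λ * Real.cos η = Real.sin (θ + 2 * η)) :
    HasDerivAt (kappaFun Λ) (-(Λ * Real.cos η)) θ := by
  have hπ := Real.pi_pos
  have harc0 : 0 ≤ Real.arcsin Λ := Real.arcsin_nonneg.mpr hΛ0.le
  have hθπ : θ < Real.pi := by linarith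
  have hη0 : 0 ≤ η := le_trans (le_max_left _ _) hη.1
  have hη2 : η ≤ (Real.pi - θ) / 2 := hη.2
  have hηh : η ≤ Real.pi / 2 := by linarith
  have hA2 : θ + 2 * η ≤ Real.pi := by linarith
  have hA1 : Real.pi / 2 ≤ θ + 2 * η := by
    rcases le_total θ (Real.pi / 2) with h | h
    · have := le_trans (le_max_right _ _) hη.1
      linarith
    · linarith
  have hanti := Tf12_anti Λ hΛ0 hΛ1
  -- inverse function N of Tf12
  have hM : StrictMono (fun x => -Tf12 Λ x) := fun a b h => by
    simpa using hanti h
  have hMs : Function.Surjective (fun x => -Tf12 Λ x) := by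
    intro y
    obtain ⟨x, hx⟩ := Tf12_surj Λ (-y)
    exact ⟨x, by simp [hx]⟩
  set e := StrictMono.orderIsoOfSurjective _ hM hMs with he
  set N : ℝ → ℝ := fun y => e.symm (-y) with hNdef
  have hTN : ∀ y, Tf12 Λ (N y) = y := by
    intro y
    have h : -Tf12 Λ (N y) = -y := e.apply_symm_apply (-y)
    linarith
  have hNcont : Continuous N := (OrderIso.continuous e.symm).comp continuous_neg
  -- N θ = η
  have harcη : Real.arcsin (Λ * Real.cos η) = Real.pi - (θ + 2 * η) := by
    rw [heq, ← Real.sin_pi_sub]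
    exact Real.arcsin_sin (by linarith) (by linarith)
  have hTη : Tf12 Λ η = θ := by
    simp only [Tf12]; rw [harcη]; ring
  have hNθ : N θ = η := hanti.injective (by rw [hTN θ, hTη])
  -- derivative of N
  set τ := -2 - 1 / Real.sqrt (1 - (Λ * Real.cos η) ^ 2) * (Λ * -Real.sin η) with hτ
  have hNd : HasDerivAt N τ⁻¹ θ :=
    HasDerivAt.of_local_left_inverse hNcont.continuousAt
      (by rw [hNθ]; exact Tf12_hasDeriv Λ hΛ0 hΛ1 η)
      (ne_of_lt (Tf12_deriv_neg Λ hΛ0 hΛ1 η))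
      (Filter.Eventually.of_forall hTN)
  -- values of Tf12 at 0 and π/2
  have hy0 : Tf12 Λ (Real.pi / 2) = 0 := by
    simp only [Tf12]
    rw [Real.cos_pi_div_two, mul_zero, Real.arcsin_zero]; ring
  have hT0 : Tf12 Λ 0 = Real.pi - Real.arcsin Λ := by
    simp only [Tf12]
    rw [Real.cos_zero, mul_one]; ring
  -- local formula for kappa
  have hloc : ∀ y ∈ Ioo 0 (Real.pi - Real.arcsin Λ),
      kappaFun Λ y = Real.cos (y + 2 * N y) + 2 * Λ * Real.sin (N y) := by
    intro y hy
    have hNyh : N y < Real.pi / 2 := by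
      have h : Tf12 Λ (Real.pi / 2) < Tf12 Λ (N y) := by rw [hTN, hy0]; exact hy.1
      exact hanti.lt_iff_gt.mp h
    have hNy0 : 0 < N y := by
      have h : Tf12 Λ (N y) < Tf12 Λ 0 := by rw [hTN, hT0]; exact hy.2
      exact hanti.lt_iff_gt.mp h
    have hcNy : 0 < Real.cos (N y) := Real.cos_pos_of_mem_Ioo ⟨by linarith, hNyh⟩
    have hyarc : Real.arcsin (Λ * Real.cos (N y)) = Real.pi - (y + 2 * N y) := by
      have h := hTN y
      simp only [Tf12] at h
      linarith
    have heqy : Λ * Real.cos (N y) = Real.sin (y + 2 * N y) := by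
      rw [show y + 2 * N y = Real.pi - Real.arcsin (Λ * Real.cos (N y)) by linarith [hyarc],
        Real.sin_pi_sub, Real.sin_arcsin (by nlinarith [Real.cos_le_one (N y)])
          (by nlinarith [Real.cos_le_one (N y)])]
    have hA1y : Real.pi / 2 ≤ y + 2 * N y := by
      have := Real.arcsin_le_pi_div_two (Λ * Real.cos (N y))
      linarith [hyarc]
    have hA2y : y + 2 * N y ≤ Real.pi := by
      have h0 : 0 ≤ Real.arcsin (Λ * Real.cos (N y)) :=
        Real.arcsin_nonneg.mpr (mul_nonneg hΛ0.le hcNy.le)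
      linarith [hyarc]
    have hfm : ∀ u ∈ Icc 0 ((Real.pi - y) / 2), fFun y Λ (N y) ≤ fFun y Λ u := by
      intro u hu
      exact fmin12 Λ y (N y) u hΛ0.le hΛ1.le hy.1.le hNy0.le hNyh.le hA1y hA2y heqy
        hu.1 (by linarith [hu.2])
    have hmem : N y ∈ Icc 0 ((Real.pi - y) / 2) := ⟨hNy0.le, by linarith⟩
    have hkey : kappaFun Λ y = fFun y Λ (N y) := by
      unfold kappaFun
      apply le_antisymm
      · exact csInf_le ⟨fFun y Λ (N y), by rintro v ⟨u, hu, rfl⟩; exact hfm u hu⟩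
          ⟨N y, hmem, rfl⟩
      · exact le_csInf ⟨_, ⟨N y, hmem, rfl⟩⟩ (by rintro b ⟨u, hu, rfl⟩; exact hfm u hu)
    rw [hkey]; rfl
  -- derivative of the local formula
  have h1 : HasDerivAt (fun y => y + 2 * N y) (1 + 2 * τ⁻¹) θ :=
    (hasDerivAt_id θ).add (hNd.const_mul 2)
  have h2 : HasDerivAt (fun y => Real.cos (y + 2 * N y))
      (-Real.sin (θ + 2 * η) * (1 + 2 * τ⁻¹)) θ := by
    have := h1.cos
    rw [hNθ] at this
    exact this
  have h3 : HasDerivAt (fun y => 2 * Λ * Real.sin (N y))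
      (2 * Λ * (Real.cos η * τ⁻¹)) θ := by
    have := hNd.sin.const_mul (2 * Λ)
    rw [hNθ] at this
    exact this
  have hF : HasDerivAt (fun y => Real.cos (y + 2 * N y) + 2 * Λ * Real.sin (N y))
      (-(Λ * Real.cos η)) θ := by
    have h4 := h2.fun_add h3
    refine h4.congr_deriv ?_
    rw [← heq]; ring
  exact hF.congr_of_eventuallyEq
    (Filter.eventuallyEq_of_mem (Ioo_mem_nhds hθ0 hθ) hloc)
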